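/- Let F be a differential field with constants K, and let M ∈ F^{2×2} be upper triangular with M M' = M' M. Then M is of Type 1, i.e., an F-linear combination of pairwise commuting constant matrices. -/

import Mathlib

def IsDeriv {F : Type*} [Field F] (d : F → F) : Prop :=
  (∀ a b, d (a + b) = d a + d b) ∧ (∀ a b, d (a * b) = d a * b + a * d b)

/-- `M` is of Type 1: an `F`-linear combination of pairwise commuting matrices
with constant entries. -/
def IsType1 {F : Type*} [Field F] (d : F → F) {n : ℕ}
    (M : Matrix (Fin n) (Fin n) F) : Prop :=
  ∃ (k : ℕ) (f : Fin k → F) (C : Fin k → Matrix (Fin n) (Fin n) F),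
    (∀ j p q, d (C j p q) = 0) ∧
    (∀ i j, C i * C j = C j * C i) ∧
    M = ∑ j, f j • C j

section aux
variable {F : Type*} [Field F] {d : F → F}

lemma dZero (hd : IsDeriv d) : d 0 = 0 := by
  have := hd.1 0 0; simp at this; exact this

lemma dOne (hd : IsDeriv d) : d 1 = 0 := by
  have := hd.2 1 1; simp at this; exact this

lemma dNeg (hd : IsDeriv d) (a : F) : d (-a) = - d a := by
  have h := hd.1 a (-a)
  simp [dZero hd] at h
  linear_combination -h

lemma dSub (hd : IsDeriv d) (a b : F) : d (a - b) = d a - d b := by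
  have := hd.1 a (-b)
  rw [dNeg hd] at this
  simpa [sub_eq_add_neg] using this

lemma dInv (hd : IsDeriv d) {x : F} (hx : x ≠ 0) :
    d x⁻¹ = -(d x) * (x⁻¹ * x⁻¹) := by
  have h := hd.2 x x⁻¹
  rw [mul_inv_cancel₀ hx, dOne hd] at h
  have h2 : x * d x⁻¹ = -(d x * x⁻¹) := by linear_combination -h
  calc d x⁻¹ = x⁻¹ * (x * d x⁻¹) := by rw [← mul_assoc, inv_mul_cancel₀ hx, one_mul]
    _ = x⁻¹ * (-(d x * x⁻¹)) := by rw [h2]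
    _ = -(d x) * (x⁻¹ * x⁻¹) := by ring

end aux

/-- An upper triangular `2×2` matrix over a differential field that commutes with
its derivative is of Type 1. -/
theorem upper_triangular_2x2_type1 {F : Type*} [Field F]
    (d : F → F) (hd : IsDeriv d)
    (M : Matrix (Fin 2) (Fin 2) F)
    (htri : M.BlockTriangular id)
    (hcomm : M * M.map d = M.map d * M) :
    IsType1 d M := by
  set a := M 0 0 with ha
  set b := M 0 1 with hb
  set c := M 1 1 with hc
  have h0 : M 1 0 = 0 := htri (by decide)
  have key : d b * (a - c) = b * (d a - d c) := by
    have h := congrFun (congrFun hcomm 0) 1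
    simp [Matrix.mul_apply, Matrix.map_apply, Fin.sum_univ_two, h0, dZero hd,
      ← ha, ← hb, ← hc] at h
    linear_combination h
  by_cases hac : a = c
  · refine ⟨2, ![a, b], ![1, !![0,1;0,0]], ?_, ?_, ?_⟩
    · intro j p q
      fin_cases j <;> fin_cases p <;> fin_cases q <;>
        simp [Matrix.one_apply, dZero hd, dOne hd]
    · intro i j
      fin_cases i <;> fin_cases j <;> simp
    · ext p q
      fin_cases p <;> fin_cases q <;>
        simp [Fin.sum_univ_two, Matrix.one_apply, ← ha, ← hb, ← hc, h0, hac]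
  · have hx : a - c ≠ 0 := sub_ne_zero.mpr hac
    set g := b * (a - c)⁻¹ with hg
    have hdg : d g = 0 := by
      rw [hg, hd.2, dInv hd hx, dSub hd]
      field_simp
      linear_combination key
    refine ⟨2, ![a, c], ![!![1, g; 0, 0], !![0, -g; 0, 1]], ?_, ?_, ?_⟩
    · intro j p q
      fin_cases j <;> fin_cases p <;> fin_cases q <;>
        simp [dZero hd, dOne hd, dNeg hd, hdg]
    · intro i j
      fin_cases i <;> fin_cases j <;>
        · ext p q
          fin_cases p <;> fin_cases q <;>
            simp [Matrix.mul_apply, Fin.sum_univ_two]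
    · ext p q
      fin_cases p <;> fin_cases q <;>
        simp [Fin.sum_univ_two, ← ha, ← hb, ← hc, h0, hg]
      field_simp
      ring
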